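/- Let g : ℝ → ℝ be continuous on [0,T], extended by g(t) = g(min(max(t,0),T)) for all real t. Suppose there exists an integrable function ρ ∈ L¹(0,T) such that (g(t+h) − g(t))/h ≥ ρ(t) for a.e. t ∈ [0,T] and all 0 < h ≤ T − t. Then for all 0 ≤ α < β ≤ T, g(β) − g(α) ≥ ∫_α^β liminf_{h→0⁺} (g(t+h) − g(t))/h dt. -/

import Mathlib

open MeasureTheory Filter Set
open scoped Topology ENNReal

lemma stmt4_basis : (nhdsWithin (0:ℝ) (Set.Ioi 0)).HasBasis (fun _ : ℕ => True)
    (fun n => Set.Ioo (0:ℝ) (1/(n+1))) := by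
  refine (nhdsGT_basis (0:ℝ)).to_hasBasis (fun ε hε => ?_) (fun n _ => ?_)
  · obtain ⟨n, hn⟩ := exists_nat_one_div_lt hε
    exact ⟨n, trivial, Set.Ioo_subset_Ioo_right hn.le⟩
  · exact ⟨1/(n+1), by positivity, subset_rfl⟩

lemma stmt4_meas {g : ℝ → ℝ} (hgc : Continuous g) :
    Measurable (fun t => liminf (fun h : ℝ => (g (t + h) - g t) / h)
      (nhdsWithin 0 (Set.Ioi 0))) := by
  set L := nhdsWithin (0:ℝ) (Set.Ioi 0) with hL
  set q : ℝ → ℝ → ℝ := fun t h => (g (t + h) - g t) / h with hqdef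
  have hqm : ∀ r : ℚ, Measurable (fun t => q t (r:ℝ)) := by
    intro r
    exact (((hgc.comp (continuous_id.add continuous_const)).sub hgc).div_const _).measurable
  set v : Filter ℚ := Filter.comap (fun r : ℚ => (r:ℝ)) L with hv
  have hbas : v.HasCountableBasis (fun _ : ℕ => True)
      (fun n => (fun r : ℚ => (r:ℝ)) ⁻¹' Set.Ioo 0 (1/(n+1))) :=
    ⟨stmt4_basis.comap _, Set.to_countable _⟩
  have hmeas : Measurable (fun t => liminf (fun r : ℚ => q t (r:ℝ)) v) :=
    Measurable.liminf' hqm hbas (fun _ => Set.to_countable _)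
  have hkey : ∀ t, liminf (fun h : ℝ => q t h) L = liminf (fun r : ℚ => q t (r:ℝ)) v := by
    intro t
    have hSeq : {a : ℝ | ∀ᶠ h in L, a ≤ q t h} = {a : ℝ | ∀ᶠ (r : ℚ) in v, a ≤ q t (r:ℝ)} := by
      ext a
      constructor
      · intro ha
        exact Filter.Eventually.comap (show ∀ᶠ h in L, a ≤ q t h from ha) (fun r : ℚ => (r:ℝ))
      · intro ha
        obtain ⟨s, hsL, hs⟩ := Filter.mem_comap.mp ha
        obtain ⟨δ, hδ, hIoo⟩ := mem_nhdsGT_iff_exists_Ioo_subset.mp hsL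
        have hδ0 : (0:ℝ) < δ := hδ
        have hclaim : ∀ x ∈ Set.Ioo (0:ℝ) δ, a ≤ q t x := by
          rintro x ⟨hx0, hxδ⟩
          have hex : ∀ n : ℕ, ∃ r : ℚ, max (x/2) (x - 1/(n+1)) < (r:ℝ) ∧ (r:ℝ) < x := by
            intro n
            exact exists_rat_btwn (max_lt (by linarith) (by
              have : (0:ℝ) < 1/(n+1) := by positivity
              linarith))
          choose r hr1 hr2 using hex
          have hrmem : ∀ n, a ≤ q t (r n : ℝ) := by
            intro n
            apply hs
            apply hIoo
            constructor
            · have : x/2 ≤ max (x/2) (x - 1/(n+1)) := le_max_left _ _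
              have := (this.trans_lt (hr1 n))
              linarith
            · exact (hr2 n).trans hxδ
          have hrt : Tendsto (fun n : ℕ => (r n : ℝ)) atTop (nhds x) := by
            apply tendsto_of_tendsto_of_tendsto_of_le_of_le
              (g := fun n : ℕ => x - 1/(n+1)) (h := fun _ : ℕ => x)
            · have := tendsto_one_div_add_atTop_nhds_zero_nat (𝕜 := ℝ)
              have h2 := (tendsto_const_nhds (x := x) (f := atTop (α := ℕ))).sub this
              simpa using h2
            · exact tendsto_const_nhds
            · intro n
              exact ((le_max_right _ _).trans_lt (hr1 n)).le
            · intro n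
              exact (hr2 n).le
          have hcont : ContinuousAt (fun y => q t y) x := by
            apply ContinuousAt.div
            · exact ((hgc.comp (continuous_const.add continuous_id)).continuousAt).sub
                continuousAt_const
            · exact continuousAt_id
            · exact ne_of_gt hx0
          exact ge_of_tendsto' (hcont.tendsto.comp hrt) hrmem
        exact Filter.eventually_of_mem (Ioo_mem_nhdsGT_of_mem ⟨le_refl 0, hδ0⟩) hclaim
    rw [liminf_eq, liminf_eq, hSeq]
  convert hmeas using 1
  exact funext hkey

lemma stmt4_tendsto {g : ℝ → ℝ} (hgc : Continuous g) (a b : ℝ) :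
    Tendsto (fun h : ℝ => ∫ t in a..b, (g (t + h) - g t) / h) (nhdsWithin 0 (Set.Ioi 0))
      (nhds (g b - g a)) := by
  have hii : ∀ c d : ℝ, IntervalIntegrable g volume c d := fun c d => hgc.intervalIntegrable c d
  have key : ∀ h : ℝ, h ≠ 0 → ∫ t in a..b, (g (t + h) - g t) / h
      = (∫ t in b..b+h, g t) / h - (∫ t in a..a+h, g t) / h := by
    intro h hh
    have i1 : IntervalIntegrable (fun t => g (t + h)) volume a b :=
      (hgc.comp (continuous_id.add continuous_const)).intervalIntegrable a b
    have e1 : ∫ t in a..b, (g (t + h) - g t) / h = ((∫ t in a..b, g (t+h)) - ∫ t in a..b, g t) / h := by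
      rw [← intervalIntegral.integral_sub i1 (hii a b), intervalIntegral.integral_div]
    rw [e1, intervalIntegral.integral_comp_add_right (fun t => g t) h]
    have A : (∫ t in a..(a+h), g t) + ∫ t in (a+h)..(b+h), g t = ∫ t in a..(b+h), g t :=
      intervalIntegral.integral_add_adjacent_intervals (hii _ _) (hii _ _)
    have B : (∫ t in a..b, g t) + ∫ t in b..(b+h), g t = ∫ t in a..(b+h), g t :=
      intervalIntegral.integral_add_adjacent_intervals (hii _ _) (hii _ _)
    field_simp
    linarith
  have hlim : ∀ c : ℝ, Tendsto (fun h : ℝ => (∫ t in c..c+h, g t) / h)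
      (nhdsWithin 0 (Set.Ioi 0)) (nhds (g c)) := by
    intro c
    have hd : HasDerivAt (fun u => ∫ x in (0:ℝ)..u, g x) (g c) c :=
      (hgc.integral_hasStrictDerivAt 0 c).hasDerivAt
    have hs := hasDerivAt_iff_tendsto_slope.mp hd
    have hmap : Tendsto (fun h : ℝ => c + h) (nhdsWithin 0 (Set.Ioi 0))
        (nhdsWithin c {c}ᶜ) := by
      rw [tendsto_nhdsWithin_iff]
      constructor
      · have : Tendsto (fun h : ℝ => c + h) (nhds 0) (nhds (c + 0)) :=
          (continuous_const.add continuous_id).tendsto 0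
        simpa using this.mono_left nhdsWithin_le_nhds
      · filter_upwards [self_mem_nhdsWithin] with h (hh : (0:ℝ) < h)
        simp only [Set.mem_compl_iff, Set.mem_singleton_iff]
        intro hc
        nlinarith [hc]
    have := hs.comp hmap
    apply this.congr'
    filter_upwards [self_mem_nhdsWithin] with h (hh : (0:ℝ) < h)
    have hint : (∫ x in (0:ℝ)..c, g x) + ∫ x in c..(c+h), g x = ∫ x in (0:ℝ)..(c+h), g x :=
      intervalIntegral.integral_add_adjacent_intervals (hii _ _) (hii _ _)
    simp only [Function.comp_apply, slope_def_field]
    rw [← hint]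
    simp only [add_sub_cancel_left]
  have := (hlim b).sub (hlim a)
  apply this.congr'
  filter_upwards [self_mem_nhdsWithin] with h (hh : (0:ℝ) < h)
  rw [key h (ne_of_gt hh)]

lemma stmt4_fatou {μ : Measure ℝ} [IsFiniteMeasure μ] {ψ : ℕ → ℝ → ℝ} {b : ℝ → ℝ} {N : ℝ}
    (hb : Integrable b μ) (hmeas : ∀ n, AEStronglyMeasurable (ψ n) μ)
    (hlim_meas : AEStronglyMeasurable (fun t => liminf (fun n => ψ n t) atTop) μ)
    (hlb : ∀ᵐ t ∂μ, ∀ n, b t ≤ ψ n t) (hub : ∀ᵐ t ∂μ, ∀ n, ψ n t ≤ N) :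
    ∫ t, liminf (fun n => ψ n t) atTop ∂μ ≤ liminf (fun n => ∫ t, ψ n t ∂μ) atTop := by
  set Φ : ℝ → ℝ := fun t => liminf (fun n => ψ n t) atTop with hΦ
  have hψint : ∀ n, Integrable (ψ n) μ := fun n =>
    integrable_of_le_of_le (hmeas n) (hlb.mono fun t h => h n) (hub.mono fun t h => h n)
      hb (integrable_const N)
  have hΦbd : ∀ᵐ t ∂μ, b t ≤ Φ t ∧ Φ t ≤ N := by
    filter_upwards [hlb, hub] with t h1 h2
    constructor
    · exact le_liminf_of_le
        (IsBoundedUnder.isCoboundedUnder_ge ⟨N, Filter.eventually_map.mpr (Filter.Eventually.of_forall h2)⟩)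
        (Filter.Eventually.of_forall h1)
    · exact liminf_le_of_frequently_le (Filter.Frequently.of_forall h2)
        ⟨b t, Filter.eventually_map.mpr (Filter.Eventually.of_forall h1)⟩
  have hΦint : Integrable Φ μ :=
    integrable_of_le_of_le hlim_meas (hΦbd.mono fun t h => h.1) (hΦbd.mono fun t h => h.2)
      hb (integrable_const N)
  set I : ℝ := ∫ t, b t ∂μ with hI
  -- pointwise liminf identity in ℝ≥0∞
  have hptwise : ∀ᵐ t ∂μ, ENNReal.ofReal (Φ t - b t)
      = liminf (fun n => ENNReal.ofReal (ψ n t - b t)) atTop := by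
    filter_upwards [hlb, hub] with t h1 h2
    have hbdd : IsBoundedUnder (· ≥ ·) atTop (fun n => ψ n t - b t) :=
      ⟨0, Filter.eventually_map.mpr (Filter.Eventually.of_forall fun n => by linarith [h1 n])⟩
    have hcob : IsCoboundedUnder (· ≥ ·) atTop (fun n => ψ n t - b t) :=
      IsBoundedUnder.isCoboundedUnder_ge
        ⟨N - b t, Filter.eventually_map.mpr (Filter.Eventually.of_forall fun n => by
          linarith [h2 n])⟩
    have h3 : liminf (fun n => ψ n t - b t) atTop = Φ t - b t := by
      simp only [sub_eq_add_neg]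
      rw [liminf_add_const atTop (fun n => ψ n t) (-b t)]
      · exact IsBoundedUnder.isCoboundedUnder_ge ⟨N, Filter.eventually_map.mpr
          (Filter.Eventually.of_forall h2)⟩
      · exact ⟨b t, Filter.eventually_map.mpr (Filter.Eventually.of_forall h1)⟩
    rw [← h3]
    exact Monotone.map_liminf_of_continuousAt (F := atTop)
      (f := ENNReal.ofReal) (fun x y hxy => ENNReal.ofReal_le_ofReal hxy)
      (fun n => ψ n t - b t) ENNReal.continuous_ofReal.continuousAt hcob hbdd
  have hint_eq : ∀ n, ∫⁻ t, ENNReal.ofReal (ψ n t - b t) ∂μ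
      = ENNReal.ofReal ((∫ t, ψ n t ∂μ) - I) := by
    intro n
    have h0 := ofReal_integral_eq_lintegral_ofReal ((hψint n).sub hb)
      (hlb.mono fun t h => by simp only [Pi.sub_apply, Pi.zero_apply, sub_nonneg]; exact h n)
    simp only [Pi.sub_apply] at h0
    rw [← h0, integral_sub (hψint n) hb]
  have hIle : ∀ n, I ≤ ∫ t, ψ n t ∂μ := fun n =>
    integral_mono_ae hb (hψint n) (hlb.mono fun t h => h n)
  have hIub : ∀ n, ∫ t, ψ n t ∂μ ≤ ∫ t, (fun _ => N) t ∂μ := fun n =>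
    integral_mono_ae (hψint n) (integrable_const N) (hub.mono fun t h => h n)
  -- main chain
  have hchain : ENNReal.ofReal ((∫ t, Φ t ∂μ) - I)
      ≤ ENNReal.ofReal (liminf (fun n => ∫ t, ψ n t ∂μ) atTop - I) := by
    calc ENNReal.ofReal ((∫ t, Φ t ∂μ) - I)
        = ∫⁻ t, ENNReal.ofReal (Φ t - b t) ∂μ := by
          rw [← integral_sub hΦint hb]
          exact ofReal_integral_eq_lintegral_ofReal (hΦint.sub hb)
            (hΦbd.mono fun t h => by simp [sub_nonneg]; linarith [h.1])
      _ = ∫⁻ t, liminf (fun n => ENNReal.ofReal (ψ n t - b t)) atTop ∂μ :=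
          lintegral_congr_ae hptwise
      _ ≤ liminf (fun n => ∫⁻ t, ENNReal.ofReal (ψ n t - b t) ∂μ) atTop :=
          lintegral_liminf_le' (fun n =>
            (ENNReal.measurable_ofReal.comp_aemeasurable
              (((hmeas n).aemeasurable).sub hb.aemeasurable)))
      _ = liminf (fun n => ENNReal.ofReal ((∫ t, ψ n t ∂μ) - I)) atTop := by
          simp only [hint_eq]
      _ = ENNReal.ofReal (liminf (fun n => (∫ t, ψ n t ∂μ) - I) atTop) := by
          refine (Monotone.map_liminf_of_continuousAt (F := atTop)
            (f := ENNReal.ofReal) (fun x y hxy => ENNReal.ofReal_le_ofReal hxy)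
            (fun n => (∫ t, ψ n t ∂μ) - I) ENNReal.continuous_ofReal.continuousAt ?_ ?_).symm
          · exact IsBoundedUnder.isCoboundedUnder_ge
              ⟨(∫ t, (fun _ => N) t ∂μ) - I, Filter.eventually_map.mpr
                (Filter.Eventually.of_forall fun n => by linarith [hIub n])⟩
          · exact ⟨0, Filter.eventually_map.mpr
              (Filter.Eventually.of_forall fun n => by linarith [hIle n])⟩
      _ = ENNReal.ofReal (liminf (fun n => ∫ t, ψ n t ∂μ) atTop - I) := by
          congr 1
          simp only [sub_eq_add_neg]
          rw [liminf_add_const atTop (fun n => ∫ t, ψ n t ∂μ) (-I)]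
          · exact IsBoundedUnder.isCoboundedUnder_ge
              ⟨∫ t, (fun _ => N) t ∂μ, Filter.eventually_map.mpr
                (Filter.Eventually.of_forall hIub)⟩
          · exact ⟨I, Filter.eventually_map.mpr (Filter.Eventually.of_forall hIle)⟩
  have hliminf_ge : I ≤ liminf (fun n => ∫ t, ψ n t ∂μ) atTop :=
    le_liminf_of_le (IsBoundedUnder.isCoboundedUnder_ge
      ⟨∫ t, (fun _ => N) t ∂μ, Filter.eventually_map.mpr (Filter.Eventually.of_forall hIub)⟩)
      (Filter.Eventually.of_forall hIle)
  have := (ENNReal.ofReal_le_ofReal_iff (by linarith)).mp hchain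
  linarith


/-- Lemma 5.2: one-sided differentiation lemma for continuous functions whose forward
difference quotients are bounded below by an integrable function. -/
theorem stmt_4 (T : ℝ) (hT : 0 < T) (g ρ : ℝ → ℝ)
    (hg : ContinuousOn g (Set.Icc 0 T))
    (hext : ∀ t : ℝ, g t = g (min (max t 0) T))
    (hρ : IntegrableOn ρ (Set.Ioc 0 T))
    (hbd : ∀ᵐ t ∂(volume.restrict (Set.Ioc 0 T)),
      ∀ h : ℝ, 0 < h → h ≤ T - t → ρ t ≤ (g (t + h) - g t) / h) :
    ∀ α β : ℝ, 0 ≤ α → α < β → β ≤ T →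
      (∫ t in α..β, liminf (fun h : ℝ => (g (t + h) - g t) / h) (nhdsWithin 0 (Set.Ioi 0)))
        ≤ g β - g α := by
  intro α β hα hαβ hβT
  set L := nhdsWithin (0:ℝ) (Set.Ioi 0) with hLdef
  set F : ℝ → ℝ := fun t => liminf (fun h : ℝ => (g (t + h) - g t) / h) L with hFdef
  set q : ℝ → ℝ → ℝ := fun t h => (g (t + h) - g t) / h with hqdef
  -- continuity of the extension
  have hgc : Continuous g := by
    have hmem : ∀ x : ℝ, min (max x 0) T ∈ Set.Icc (0:ℝ) T :=
      fun x => ⟨le_min (le_max_right _ _) hT.le, min_le_right _ _⟩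
    have h1 : Continuous (g ∘ fun t : ℝ => min (max t 0) T) :=
      hg.comp_continuous ((continuous_id.max continuous_const).min continuous_const) hmem
    have h2 : g = g ∘ fun t : ℝ => min (max t 0) T := funext hext
    rw [h2]; exact h1
  have hFmeas : Measurable F := stmt4_meas hgc
  have hcontq : ∀ h : ℝ, Continuous fun t => q t h := fun h =>
    ((hgc.comp (continuous_id.add continuous_const)).sub hgc).div_const h
  -- the integrable lower bound
  set b₀ : ℝ → ℝ := fun t => min (ρ t) 0 with hb₀def
  have hb₀nonpos : ∀ t, b₀ t ≤ 0 := fun t => min_le_right _ _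
  have hb₀int : IntegrableOn b₀ (Set.Ioc 0 T) := by
    refine integrable_of_le_of_le
      ((hρ.aestronglyMeasurable.aemeasurable.min aemeasurable_const).aestronglyMeasurable)
      (Filter.Eventually.of_forall fun t =>
        le_min (neg_abs_le (ρ t)) (neg_nonpos.mpr (abs_nonneg (ρ t))))
      (Filter.Eventually.of_forall hb₀nonpos) hρ.abs.neg (integrable_const 0)
  have hsubIoc : ∀ a b : ℝ, 0 ≤ a → b ≤ T → Set.Ioc a b ⊆ Set.Ioc 0 T := by
    rintro a b ha hb x ⟨h1, h2⟩
    exact ⟨lt_of_le_of_lt ha h1, h2.trans hb⟩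
  -- a.e. facts on (0, T]
  have hTne : ∀ᵐ t : ℝ ∂volume, t ≠ T := by
    have h0 : (volume : Measure ℝ) {T} = 0 := Real.volume_singleton
    rw [ae_iff]
    simpa only [not_not, Set.setOf_eq_eq_singleton] using h0
  have hltT : ∀ᵐ t ∂(volume.restrict (Set.Ioc 0 T)), t < T := by
    filter_upwards [ae_restrict_mem measurableSet_Ioc, ae_restrict_of_ae hTne] with t ht hne
    exact lt_of_le_of_ne ht.2 hne
  have hevq : ∀ᵐ t ∂(volume.restrict (Set.Ioc 0 T)), (∀ᶠ h in L, ρ t ≤ q t h) := by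
    filter_upwards [hbd, hltT] with t ht htT
    exact Filter.eventually_of_mem (Ioo_mem_nhdsGT_of_mem ⟨le_refl 0, sub_pos.mpr htT⟩)
      (fun h hh => ht h hh.1 hh.2.le)
  have hF_lb : ∀ᵐ t ∂(volume.restrict (Set.Ioc 0 T)), b₀ t ≤ F t := by
    filter_upwards [hevq] with t hev
    have h1 : F t = sSup {x : ℝ | ∀ᶠ h in L, x ≤ q t h} := liminf_eq
    by_cases hbdd : BddAbove {x : ℝ | ∀ᶠ h in L, x ≤ q t h}
    · rw [h1]
      exact (min_le_left _ _).trans (le_csSup hbdd hev)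
    · rw [h1, csSup_of_not_bddAbove hbdd, Real.sSup_empty]
      exact hb₀nonpos t
  -- truncated integrability
  have hminint : ∀ (N : ℕ) (a b : ℝ), 0 ≤ a → b ≤ T →
      Integrable (fun t => min (F t) (N:ℝ)) (volume.restrict (Set.Ioc a b)) := by
    intro N a b ha hb
    have hsub := hsubIoc a b ha hb
    refine integrable_of_le_of_le ((hFmeas.min measurable_const).aestronglyMeasurable) ?_
      (Filter.Eventually.of_forall fun t => min_le_right _ _)
      (hb₀int.mono_set hsub) (integrable_const (N:ℝ))
    filter_upwards [ae_restrict_of_ae_restrict_of_subset hsub hF_lb] with t hFt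
    exact le_min hFt ((hb₀nonpos t).trans (Nat.cast_nonneg N))
  -- main inequality for truncations, on intervals staying away from T
  have hINNER : ∀ (N : ℕ) (a b : ℝ), 0 ≤ a → a < b → b < T →
      ∫ t in Set.Ioc a b, min (F t) (N:ℝ) ≤ g b - g a := by
    intro N a b ha hab hbT'
    have hTb : 0 < T - b := sub_pos.mpr hbT'
    set μ := volume.restrict (Set.Ioc a b) with hμdef
    haveI : IsFiniteMeasure μ := by
      constructor
      rw [hμdef, Measure.restrict_apply_univ]
      exact measure_Ioc_lt_top
    have hsub := hsubIoc a b ha hbT'.le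
    have hbd' : ∀ᵐ t ∂μ, ∀ h : ℝ, 0 < h → h ≤ T - t → ρ t ≤ q t h :=
      ae_restrict_of_ae_restrict_of_subset hsub hbd
    have hmem' : ∀ᵐ t ∂μ, t ∈ Set.Ioc a b := ae_restrict_mem measurableSet_Ioc
    have hev' : ∀ᵐ t ∂μ, (∀ᶠ h in L, ρ t ≤ q t h) :=
      ae_restrict_of_ae_restrict_of_subset hsub hevq
    set u : ℕ → ℝ := fun n => (T - b)/(n+1) with hudef
    have hupos : ∀ n, 0 < u n := fun n => by
      have : (0:ℝ) ≤ n := Nat.cast_nonneg n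
      apply div_pos hTb; linarith
    have hule : ∀ n, u n ≤ T - b := fun n => by
      apply div_le_self hTb.le
      have : (0:ℝ) ≤ n := Nat.cast_nonneg n; linarith
    have hutend : Tendsto u atTop L := by
      rw [hLdef, tendsto_nhdsWithin_iff]
      constructor
      · have h1 := (tendsto_const_div_atTop_nhds_zero_nat (T-b)).comp (tendsto_add_atTop_nat 1)
        have h2 : (fun n : ℕ => (T - b) / ((n + 1 : ℕ) : ℝ)) = u := by
          funext n; rw [hudef]; push_cast; ring
        rw [← h2]; exact h1
      · exact Filter.Eventually.of_forall fun n => hupos n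
    set ψ : ℕ → ℝ → ℝ := fun n t => min (q t (u n)) (N:ℝ) with hψdef
    set bN : ℝ → ℝ := fun t => min (ρ t) (N:ℝ) with hbNdef
    have hψub : ∀ n t, ψ n t ≤ (N:ℝ) := fun n t => min_le_right _ _
    have hψlb : ∀ᵐ t ∂μ, ∀ n, bN t ≤ ψ n t := by
      filter_upwards [hbd', hmem'] with t ht htmem
      intro n
      have hq2 : ρ t ≤ q t (u n) := ht _ (hupos n) ((hule n).trans (by linarith [htmem.2]))
      exact min_le_min hq2 (le_refl (N:ℝ))
    have hψint : ∀ n, Integrable (ψ n) μ := fun n =>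
      ((hcontq (u n)).min continuous_const).integrableOn_Ioc
    have hψmeas : ∀ n, AEStronglyMeasurable (ψ n) μ := fun n => (hψint n).aestronglyMeasurable
    have hΦmeas : AEStronglyMeasurable (fun t => liminf (fun n => ψ n t) atTop) μ :=
      (Measurable.liminf fun n =>
        ((hcontq (u n)).min continuous_const).measurable).aestronglyMeasurable
    have hρ' : IntegrableOn ρ (Set.Ioc a b) := hρ.mono_set hsub
    have hbNint : Integrable bN μ := by
      refine integrable_of_le_of_le
        ((hρ'.aestronglyMeasurable.aemeasurable.min aemeasurable_const).aestronglyMeasurable)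
        (Filter.Eventually.of_forall fun t => min_le_min (le_refl (ρ t)) (Nat.cast_nonneg N))
        (Filter.Eventually.of_forall fun t => (min_le_left _ _).trans (le_abs_self _))
        (hb₀int.mono_set hsub) hρ'.abs
    have hpt : ∀ᵐ t ∂μ, min (F t) (N:ℝ) ≤ liminf (fun n => ψ n t) atTop := by
      filter_upwards [hev'] with t hev
      by_contra hcon
      push_neg at hcon
      obtain ⟨c', hc'1, hc'2⟩ := exists_between hcon
      have hc : ∃ c ∈ {x : ℝ | ∀ᶠ h in L, x ≤ q t h}, c' < c := by
        by_cases hbdd : BddAbove {x : ℝ | ∀ᶠ h in L, x ≤ q t h}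
        · apply exists_lt_of_lt_csSup ⟨ρ t, hev⟩
          have h1 : F t = sSup {x : ℝ | ∀ᶠ h in L, x ≤ q t h} := liminf_eq
          rw [← h1]
          exact hc'2.trans_le (min_le_left _ _)
        · obtain ⟨c, hcS, hcc⟩ := not_bddAbove_iff.mp hbdd c'
          exact ⟨c, hcS, hcc⟩
      obtain ⟨c, hcS, hc'c⟩ := hc
      have hevn : ∀ᶠ n in atTop, c' ≤ ψ n t := by
        filter_upwards [hutend.eventually hcS] with n hn
        exact le_min (hc'c.le.trans hn) (hc'2.trans_le (min_le_right _ _)).le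
      have hfin : c' ≤ liminf (fun n => ψ n t) atTop :=
        le_liminf_of_le (IsBoundedUnder.isCoboundedUnder_ge ⟨(N:ℝ),
          Filter.eventually_map.mpr (Filter.Eventually.of_forall fun n => hψub n t)⟩) hevn
      exact absurd hfin (not_le.mpr hc'1)
    have hfatou := stmt4_fatou hbNint hψmeas hΦmeas hψlb
      (Filter.Eventually.of_forall fun t n => hψub n t)
    have hΦbd1 : ∀ᵐ t ∂μ, bN t ≤ liminf (fun n => ψ n t) atTop := by
      filter_upwards [hψlb] with t ht
      exact le_liminf_of_le (IsBoundedUnder.isCoboundedUnder_ge ⟨(N:ℝ),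
        Filter.eventually_map.mpr (Filter.Eventually.of_forall fun n => hψub n t)⟩)
        (Filter.Eventually.of_forall ht)
    have hΦbd2 : ∀ᵐ t ∂μ, liminf (fun n => ψ n t) atTop ≤ (N:ℝ) := by
      filter_upwards [hψlb] with t ht
      exact liminf_le_of_frequently_le (Filter.Frequently.of_forall fun n => hψub n t)
        ⟨bN t, Filter.eventually_map.mpr (Filter.Eventually.of_forall ht)⟩
    have hΦint : Integrable (fun t => liminf (fun n => ψ n t) atTop) μ :=
      integrable_of_le_of_le hΦmeas hΦbd1 hΦbd2 hbNint (integrable_const _)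
    have hqint : ∀ n, Integrable (fun t => q t (u n)) μ := fun n =>
      (hcontq (u n)).integrableOn_Ioc
    have hintle : ∀ n, ∫ t, ψ n t ∂μ ≤ ∫ t, q t (u n) ∂μ := fun n =>
      integral_mono_ae (hψint n) (hqint n)
        (Filter.Eventually.of_forall fun t => min_le_left _ _)
    have hqlim : Tendsto (fun n => ∫ t, q t (u n) ∂μ) atTop (𝓝 (g b - g a)) := by
      have h0 := (stmt4_tendsto hgc a b).comp hutend
      apply h0.congr
      intro n
      show (∫ t in a..b, (g (t + u n) - g t) / (u n)) = ∫ t, q t (u n) ∂μ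
      rw [intervalIntegral.integral_of_le hab.le]
    have hliminf_le : liminf (fun n => ∫ t, ψ n t ∂μ) atTop ≤ g b - g a := by
      have h1 : liminf (fun n => ∫ t, ψ n t ∂μ) atTop
          ≤ liminf (fun n => ∫ t, q t (u n) ∂μ) atTop := by
        exact liminf_le_liminf (Filter.Eventually.of_forall hintle)
          ⟨∫ t, bN t ∂μ, Filter.eventually_map.mpr (Filter.Eventually.of_forall fun n =>
            integral_mono_ae hbNint (hψint n) (hψlb.mono fun t ht => ht n))⟩
          hqlim.isBoundedUnder_le.isCoboundedUnder_ge
      rw [hqlim.liminf_eq] at h1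
      exact h1
    calc ∫ t in Set.Ioc a b, min (F t) (N:ℝ)
        ≤ ∫ t, liminf (fun n => ψ n t) atTop ∂μ :=
          integral_mono_ae (hminint N a b ha hbT'.le) hΦint hpt
      _ ≤ liminf (fun n => ∫ t, ψ n t ∂μ) atTop := hfatou
      _ ≤ g b - g a := hliminf_le
  -- integrate the truncation away, still away from T
  have hSTEP2 : ∀ a b : ℝ, 0 ≤ a → a < b → b < T →
      IntegrableOn F (Set.Ioc a b) ∧ ∫ t in Set.Ioc a b, F t ≤ g b - g a := by
    intro a b ha hab hbT'
    set μ := volume.restrict (Set.Ioc a b) with hμdef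
    have hsub := hsubIoc a b ha hbT'.le
    have hFlb' : ∀ᵐ t ∂μ, b₀ t ≤ F t := ae_restrict_of_ae_restrict_of_subset hsub hF_lb
    have hb₀int' : Integrable b₀ μ := hb₀int.mono_set hsub
    have hb₀meas' : AEMeasurable b₀ μ := hb₀int'.aemeasurable
    have hmono : ∀ t, Monotone fun N : ℕ => min (F t) (N:ℝ) := by
      intro t N M hNM
      exact min_le_min (le_refl _) (Nat.cast_le.mpr hNM)
    have htend : ∀ t, Tendsto (fun N : ℕ => min (F t) (N:ℝ)) atTop (𝓝 (F t)) := by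
      intro t
      apply tendsto_atTop_of_eventually_const (i₀ := ⌈F t⌉₊)
      intro N hN
      exact min_eq_left ((Nat.le_ceil _).trans (Nat.cast_le.mpr hN))
    have hGmeas : ∀ N : ℕ, AEMeasurable (fun t => ENNReal.ofReal (min (F t) (N:ℝ) - b₀ t)) μ :=
      fun N => ENNReal.measurable_ofReal.comp_aemeasurable
        (((hFmeas.min measurable_const).aemeasurable).sub hb₀meas')
    have hlint : Tendsto (fun N : ℕ => ∫⁻ t, ENNReal.ofReal (min (F t) (N:ℝ) - b₀ t) ∂μ) atTop
        (𝓝 (∫⁻ t, ENNReal.ofReal (F t - b₀ t) ∂μ)) := by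
      apply lintegral_tendsto_of_tendsto_of_monotone hGmeas
      · exact Filter.Eventually.of_forall fun t N M hNM =>
          ENNReal.ofReal_le_ofReal (sub_le_sub_right (hmono t hNM) _)
      · exact Filter.Eventually.of_forall fun t =>
          (ENNReal.continuous_ofReal.tendsto _).comp ((htend t).sub_const (b₀ t))
    have hC : ∀ N : ℕ, ∫⁻ t, ENNReal.ofReal (min (F t) (N:ℝ) - b₀ t) ∂μ
        ≤ ENNReal.ofReal (g b - g a - ∫ t, b₀ t ∂μ) := by
      intro N
      have hGint : Integrable (fun t => min (F t) (N:ℝ) - b₀ t) μ :=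
        (hminint N a b ha hbT'.le).sub hb₀int'
      rw [← ofReal_integral_eq_lintegral_ofReal hGint (hFlb'.mono fun t ht =>
        sub_nonneg.mpr (le_min ht ((hb₀nonpos t).trans (Nat.cast_nonneg N))))]
      apply ENNReal.ofReal_le_ofReal
      rw [integral_sub (hminint N a b ha hbT'.le) hb₀int']
      have h1 := hINNER N a b ha hab hbT'
      have h2 : ∫ t in Set.Ioc a b, min (F t) (N:ℝ) = ∫ t, min (F t) (N:ℝ) ∂μ := rfl
      linarith [h2 ▸ h1]
    have hW : ∫⁻ t, ENNReal.ofReal (F t - b₀ t) ∂μ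
        ≤ ENNReal.ofReal (g b - g a - ∫ t, b₀ t ∂μ) :=
      le_of_tendsto hlint (Filter.Eventually.of_forall hC)
    have hFsubint : Integrable (fun t => F t - b₀ t) μ := by
      constructor
      · exact (hFmeas.aemeasurable.sub hb₀meas').aestronglyMeasurable
      · rw [hasFiniteIntegral_iff_ofReal (hFlb'.mono fun t ht => sub_nonneg.mpr ht)]
        exact lt_of_le_of_lt hW ENNReal.ofReal_lt_top
    have hFint : Integrable F μ := by
      have hFeq : F = fun t => (F t - b₀ t) + b₀ t := by funext t; ring
      rw [hFeq]
      exact hFsubint.add hb₀int'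
    refine ⟨hFint, ?_⟩
    have hlim2 : Tendsto (fun N : ℕ => ∫ t, min (F t) (N:ℝ) ∂μ) atTop (𝓝 (∫ t, F t ∂μ)) :=
      integral_tendsto_of_tendsto_of_monotone (fun N => hminint N a b ha hbT'.le) hFint
        (Filter.Eventually.of_forall hmono) (Filter.Eventually.of_forall htend)
    exact le_of_tendsto hlim2 (Filter.Eventually.of_forall fun N => hINNER N a b ha hab hbT')
  -- approximate β from the left
  set βk : ℕ → ℝ := fun k => β - (β - α)/(k+2) with hβkdef
  have hβα : 0 < β - α := sub_pos.mpr hαβ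
  have hk2 : ∀ k : ℕ, (1:ℝ) < (k:ℝ) + 2 := fun k => by
    have : (0:ℝ) ≤ k := Nat.cast_nonneg k
    linarith
  have hβk1 : ∀ k, α < βk k := by
    intro k
    have h1 : (β - α)/((k:ℝ)+2) < β - α := div_lt_self hβα (hk2 k)
    have h2 : βk k = β - (β - α)/((k:ℝ)+2) := rfl
    rw [h2]; linarith
  have hβk2 : ∀ k, βk k < β := fun k => by
    have h0 : (0:ℝ) < (k:ℝ) + 2 := by linarith [hk2 k]
    have h1 : 0 < (β - α)/((k:ℝ)+2) := div_pos hβα h0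
    have h2 : βk k = β - (β - α)/((k:ℝ)+2) := rfl
    rw [h2]; linarith
  have hβkT : ∀ k, βk k < T := fun k => lt_of_lt_of_le (hβk2 k) hβT
  have hβkmono : Monotone βk := by
    intro k m hkm
    have h1 : (β-α)/((m:ℝ)+2) ≤ (β-α)/((k:ℝ)+2) := by
      apply div_le_div_of_nonneg_left hβα.le (by linarith [hk2 k])
      have := (Nat.cast_le (α := ℝ)).mpr hkm
      linarith
    have h2 : βk k = β - (β - α)/((k:ℝ)+2) := rfl
    have h3 : βk m = β - (β - α)/((m:ℝ)+2) := rfl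
    rw [h2, h3]; linarith
  have hβktend : Tendsto βk atTop (𝓝 β) := by
    have h1 : Tendsto (fun k : ℕ => ((k:ℝ)+2)) atTop atTop :=
      tendsto_atTop_add_const_right atTop 2 tendsto_natCast_atTop_atTop
    have h2 : Tendsto (fun k : ℕ => (β - α)/((k:ℝ)+2)) atTop (𝓝 0) :=
      Tendsto.div_atTop tendsto_const_nhds h1
    have h3 := (tendsto_const_nhds (x := β) (f := (atTop : Filter ℕ))).sub h2
    simpa using h3
  have hsetsmono : Monotone fun k => Set.Ioc α (βk k) := fun k m hkm =>
    Set.Ioc_subset_Ioc_right (hβkmono hkm)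
  have hUnion : (⋃ k, Set.Ioc α (βk k)) = Set.Ioo α β := by
    ext x
    simp only [Set.mem_iUnion, Set.mem_Ioc, Set.mem_Ioo]
    constructor
    · rintro ⟨k, h1, h2⟩
      exact ⟨h1, h2.trans_lt (hβk2 k)⟩
    · rintro ⟨h1, h2⟩
      obtain ⟨k, hk⟩ := (hβktend.eventually (eventually_gt_nhds h2)).exists
      exact ⟨k, h1, hk.le⟩
  have hsubαβ : Set.Ioo α β ⊆ Set.Ioc 0 T := fun x hx =>
    ⟨lt_of_le_of_lt hα hx.1, hx.2.le.trans hβT⟩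
  have hrestr_eq : volume.restrict (Set.Ioo α β) = volume.restrict (Set.Ioc α β) :=
    Measure.restrict_congr_set Ioo_ae_eq_Ioc
  obtain ⟨M, hM⟩ := (isCompact_Icc (a := (0:ℝ)) (b := T)).exists_bound_of_continuousOn hg
  set W : ℝ → ENNReal := fun t => ENNReal.ofReal (F t - b₀ t) with hWdef
  set C : ℝ := 2*M + ∫ t in Set.Ioc 0 T, (-b₀ t) with hCdef
  have hWk : ∀ k, ∫⁻ t in Set.Ioc α (βk k), W t ≤ ENNReal.ofReal C := by
    intro k
    have hFk := hSTEP2 α (βk k) hα (hβk1 k) (hβkT k)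
    have hsubk := hsubIoc α (βk k) hα (hβkT k).le
    have hb₀k : Integrable b₀ (volume.restrict (Set.Ioc α (βk k))) := hb₀int.mono_set hsubk
    have hFlbk : ∀ᵐ t ∂(volume.restrict (Set.Ioc α (βk k))), b₀ t ≤ F t :=
      ae_restrict_of_ae_restrict_of_subset hsubk hF_lb
    have hGik : Integrable (fun t => F t - b₀ t) (volume.restrict (Set.Ioc α (βk k))) :=
      hFk.1.sub hb₀k
    have heq : ∫⁻ t in Set.Ioc α (βk k), W t
        = ENNReal.ofReal (∫ t in Set.Ioc α (βk k), (F t - b₀ t)) :=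
      (ofReal_integral_eq_lintegral_ofReal hGik
        (hFlbk.mono fun t ht => sub_nonneg.mpr ht)).symm
    rw [heq]
    apply ENNReal.ofReal_le_ofReal
    rw [integral_sub hFk.1 hb₀k]
    have h1 : ∫ t in Set.Ioc α (βk k), F t ≤ g (βk k) - g α := hFk.2
    have h2 : ∫ t in Set.Ioc α (βk k), (-b₀ t) ≤ ∫ t in Set.Ioc 0 T, (-b₀ t) :=
      setIntegral_mono_set hb₀int.neg
        (Filter.Eventually.of_forall fun t => neg_nonneg.mpr (hb₀nonpos t))
        hsubk.eventuallyLE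
    have h2' : - ∫ t in Set.Ioc α (βk k), b₀ t = ∫ t in Set.Ioc α (βk k), (-b₀ t) := by
      rw [integral_neg]
    have h4 := hM (βk k) ⟨le_trans hα (hβk1 k).le, (hβkT k).le⟩
    have h5 := hM α ⟨hα, hαβ.le.trans hβT⟩
    rw [Real.norm_eq_abs] at h4 h5
    have h4' := abs_le.mp h4
    have h5' := abs_le.mp h5
    have hCeq : C = 2*M + ∫ t in Set.Ioc 0 T, (-b₀ t) := rfl
    rw [hCeq]
    linarith [h2' ▸ h2]
  have hWIoo : ∫⁻ t in Set.Ioo α β, W t ≤ ENNReal.ofReal C := by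
    have haemeas : ∀ k, AEMeasurable ((Set.Ioc α (βk k)).indicator W) volume := by
      intro k
      rw [aemeasurable_indicator_iff measurableSet_Ioc]
      exact ENNReal.measurable_ofReal.comp_aemeasurable
        (hFmeas.aemeasurable.sub (hb₀int.mono_set
          (hsubIoc α (βk k) hα (hβkT k).le)).aemeasurable)
    have hmono2 : ∀ᵐ t ∂(volume : Measure ℝ),
        Monotone fun k => (Set.Ioc α (βk k)).indicator W t :=
      Filter.Eventually.of_forall fun t k m hkm =>
        Set.indicator_le_indicator_of_subset (hsetsmono hkm) (fun _ => zero_le) t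
    have htend2 : ∀ᵐ t ∂(volume : Measure ℝ), Tendsto
        (fun k => (Set.Ioc α (βk k)).indicator W t) atTop
        (𝓝 ((Set.Ioo α β).indicator W t)) := by
      refine Filter.Eventually.of_forall fun t => ?_
      by_cases ht : t ∈ Set.Ioo α β
      · have hev : ∀ᶠ k in atTop,
            (Set.Ioc α (βk k)).indicator W t = (Set.Ioo α β).indicator W t := by
          filter_upwards [hβktend.eventually (eventually_gt_nhds ht.2)] with k hk
          rw [Set.indicator_of_mem (show t ∈ Set.Ioc α (βk k) from ⟨ht.1, hk.le⟩) W,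
            Set.indicator_of_mem ht W]
        have hconst : Tendsto (fun _ : ℕ => (Set.Ioo α β).indicator W t) atTop
            (𝓝 ((Set.Ioo α β).indicator W t)) := tendsto_const_nhds
        exact hconst.congr' (hev.mono fun k hk => hk.symm)
      · have hev : ∀ k, (Set.Ioc α (βk k)).indicator W t = (Set.Ioo α β).indicator W t := by
          intro k
          rw [Set.indicator_of_notMem
            (show t ∉ Set.Ioc α (βk k) from fun hc => ht ⟨hc.1, hc.2.trans_lt (hβk2 k)⟩) W,
            Set.indicator_of_notMem ht W]
        simp only [hev]
        exact tendsto_const_nhds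
    have h5 : Tendsto (fun k => ∫⁻ t in Set.Ioc α (βk k), W t) atTop
        (𝓝 (∫⁻ t in Set.Ioo α β, W t)) := by
      have h6 := lintegral_tendsto_of_tendsto_of_monotone haemeas hmono2 htend2
      simpa only [lintegral_indicator measurableSet_Ioc,
        lintegral_indicator measurableSet_Ioo] using h6
    exact le_of_tendsto h5 (Filter.Eventually.of_forall hWk)
  have hFIoo : IntegrableOn F (Set.Ioo α β) := by
    have hb₀Ioo : Integrable b₀ (volume.restrict (Set.Ioo α β)) := hb₀int.mono_set hsubαβ
    have hFlbIoo : ∀ᵐ t ∂(volume.restrict (Set.Ioo α β)), b₀ t ≤ F t :=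
      ae_restrict_of_ae_restrict_of_subset hsubαβ hF_lb
    have h1 : Integrable (fun t => F t - b₀ t) (volume.restrict (Set.Ioo α β)) := by
      constructor
      · exact (hFmeas.aemeasurable.sub hb₀Ioo.aemeasurable).aestronglyMeasurable
      · rw [hasFiniteIntegral_iff_ofReal (hFlbIoo.mono fun t ht => sub_nonneg.mpr ht)]
        exact lt_of_le_of_lt hWIoo ENNReal.ofReal_lt_top
    have hFeq : F = fun t => (F t - b₀ t) + b₀ t := by funext t; ring
    rw [IntegrableOn, hFeq]
    exact h1.add hb₀Ioo
  have hFIoc : IntegrableOn F (Set.Ioc α β) := by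
    rw [IntegrableOn, ← hrestr_eq]
    exact hFIoo
  have h6 : Tendsto (fun k => ∫ t in Set.Ioc α (βk k), F t) atTop
      (𝓝 (∫ t in Set.Ioo α β, F t)) := by
    have h7 := tendsto_setIntegral_of_monotone (fun k => measurableSet_Ioc) hsetsmono
      (by rw [hUnion]; exact hFIoo)
    rwa [hUnion] at h7
  have h8 : Tendsto (fun k => g (βk k) - g α) atTop (𝓝 (g β - g α)) :=
    ((hgc.tendsto β).comp hβktend).sub tendsto_const_nhds
  have h9 : ∫ t in Set.Ioo α β, F t = ∫ t in Set.Ioc α β, F t := by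
    rw [hrestr_eq]
  rw [intervalIntegral.integral_of_le hαβ.le, ← h9]
  exact le_of_tendsto_of_tendsto' h6 h8 (fun k => (hSTEP2 α (βk k) hα (hβk1 k) (hβkT k)).2)
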